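/- If g ∈ L²(ℝ) satisfies |g(t)| ≤ C e^{-λ|t|} for all t, then for every λ₁ < λ there is a constant C₁ such that the short-time Fourier transform satisfies |(V_g g)(t,ω)| ≤ C₁ e^{-λ₁|t|} for all t, ω ∈ ℝ. -/

import Mathlib

open MeasureTheory

lemma integrable_exp_neg_mul_abs' {b : ℝ} (hb : 0 < b) :
    Integrable (fun x : ℝ => Real.exp (-b * |x|)) := by
  have hIoi : IntegrableOn (fun x : ℝ => Real.exp (-b * |x|)) (Set.Ioi 0) := by
    refine (exp_neg_integrableOn_Ioi 0 hb).congr_fun (fun x hx => ?_) measurableSet_Ioi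
    rw [abs_eq_self.mpr (le_of_lt hx)]
  have hIic : IntegrableOn (fun x : ℝ => Real.exp (-b * |x|)) (Set.Iic 0) := by
    rw [← Measure.map_neg_eq_self (volume : Measure ℝ)]
    have m : MeasurableEmbedding fun x : ℝ => -x := (Homeomorph.neg ℝ).measurableEmbedding
    rw [m.integrableOn_map_iff]
    simp_rw [Function.comp_def, abs_neg, Set.neg_preimage, Set.neg_Iic, neg_zero]
    exact Iff.mpr integrableOn_Ici_iff_integrableOn_Ioi hIoi
  have := hIic.union hIoi
  rwa [Set.Iic_union_Ioi, integrableOn_univ] at this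

/-- Exponential decay of the window implies exponential decay in time
of the short-time Fourier transform (V_g g)(t, ω). -/
theorem stft_decay_time
    (g : ℝ → ℂ) (hg : MemLp g 2 (volume : Measure ℝ))
    (C lam lam₁ : ℝ) (hlam : 0 < lam) (hlt : lam₁ < lam)
    (hdecay : ∀ t : ℝ, ‖g t‖ ≤ C * Real.exp (-lam * |t|)) :
    ∃ C₁ : ℝ, ∀ t ω : ℝ,
      ‖∫ x : ℝ, g x * starRingEnd ℂ (g (x - t)) *
          Complex.exp (-2 * Real.pi * Complex.I * (x : ℂ) * (ω : ℂ))‖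
        ≤ C₁ * Real.exp (-lam₁ * |t|) := by
  have hC : 0 ≤ C := by
    have := (norm_nonneg (g 0)).trans (hdecay 0)
    nlinarith [Real.exp_pos (-lam * |(0:ℝ)|)]
  set l := max lam₁ 0 with hl
  have hl0 : 0 ≤ l := le_max_right _ _
  have hll : l < lam := max_lt hlt hlam
  set μ := lam - l with hμdef
  have hμ : 0 < μ := by simp [hμdef]; linarith
  have hint : Integrable (fun x : ℝ => Real.exp (-μ * |x|)) :=
    integrable_exp_neg_mul_abs' hμ
  refine ⟨C ^ 2 * ∫ x : ℝ, Real.exp (-μ * |x|), fun t ω => ?_⟩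
  have hI0 : 0 ≤ ∫ x : ℝ, Real.exp (-μ * |x|) :=
    integral_nonneg fun x => (Real.exp_pos _).le
  -- pointwise bound
  have key : ‖∫ x : ℝ, g x * starRingEnd ℂ (g (x - t)) *
      Complex.exp (-2 * Real.pi * Complex.I * (x : ℂ) * (ω : ℂ))‖
      ≤ ∫ x : ℝ, (C ^ 2 * Real.exp (-l * |t|)) * Real.exp (-μ * |x|) := by
    refine norm_integral_le_of_norm_le ((hint.const_mul _)) (Filter.Eventually.of_forall fun x => ?_)
    have hnorm : ‖g x * starRingEnd ℂ (g (x - t)) *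
        Complex.exp (-2 * Real.pi * Complex.I * (x : ℂ) * (ω : ℂ))‖
        = ‖g x‖ * ‖g (x - t)‖ := by
      rw [norm_mul, norm_mul, RCLike.norm_conj]
      have : ‖Complex.exp (-2 * Real.pi * Complex.I * (x : ℂ) * (ω : ℂ))‖ = 1 := by
        rw [Complex.norm_exp]
        have : (-2 * Real.pi * Complex.I * (x : ℂ) * (ω : ℂ)).re = 0 := by
          simp [Complex.mul_re, Complex.mul_im]
        rw [this, Real.exp_zero]
      rw [this, mul_one]
    rw [hnorm]
    have h1 := hdecay x
    have h2 := hdecay (x - t)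
    have hexp : Real.exp (-lam * |x|) * Real.exp (-lam * |x - t|)
        ≤ Real.exp (-l * |t|) * Real.exp (-μ * |x|) := by
      rw [← Real.exp_add, ← Real.exp_add]
      apply Real.exp_le_exp.mpr
      have htriangle : |t| ≤ |x| + |x - t| := by
        have : t = x - (x - t) := by ring
        calc |t| = |x - (x - t)| := by rw [← this]
          _ ≤ |x| + |x - t| := abs_sub _ _
      nlinarith [abs_nonneg x, abs_nonneg (x - t), abs_nonneg t]
    calc ‖g x‖ * ‖g (x - t)‖
        ≤ (C * Real.exp (-lam * |x|)) * (C * Real.exp (-lam * |x - t|)) := by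
          apply mul_le_mul h1 h2 (norm_nonneg _)
          positivity
      _ = C ^ 2 * (Real.exp (-lam * |x|) * Real.exp (-lam * |x - t|)) := by ring
      _ ≤ C ^ 2 * (Real.exp (-l * |t|) * Real.exp (-μ * |x|)) := by
          apply mul_le_mul_of_nonneg_left hexp (by positivity)
      _ = (C ^ 2 * Real.exp (-l * |t|)) * Real.exp (-μ * |x|) := by ring
  have hintval : ∫ x : ℝ, (C ^ 2 * Real.exp (-l * |t|)) * Real.exp (-μ * |x|)
      = (C ^ 2 * ∫ x : ℝ, Real.exp (-μ * |x|)) * Real.exp (-l * |t|) := by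
    rw [integral_const_mul]; ring
  have hle : Real.exp (-l * |t|) ≤ Real.exp (-lam₁ * |t|) := by
    apply Real.exp_le_exp.mpr
    have : lam₁ ≤ l := le_max_left _ _
    nlinarith [abs_nonneg t]
  calc ‖∫ x : ℝ, g x * starRingEnd ℂ (g (x - t)) *
      Complex.exp (-2 * Real.pi * Complex.I * (x : ℂ) * (ω : ℂ))‖
      ≤ (C ^ 2 * ∫ x : ℝ, Real.exp (-μ * |x|)) * Real.exp (-l * |t|) := by
        rw [← hintval]; exact key
    _ ≤ (C ^ 2 * ∫ x : ℝ, Real.exp (-μ * |x|)) * Real.exp (-lam₁ * |t|) := by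
        apply mul_le_mul_of_nonneg_left hle (by positivity)
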